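/- Let s(j) = cos(2πf₁j/n) + a·cos(2πf₂j/n + φ) with integer frequencies f₂ < f₁ ≤ n/2 − 1, and let w be a double convolution filter (DFT values in [0,1]) with ŵ(f₁) = 0 and ŵ(f₂) ∈ (0,1]. Then V_w^p s → cos(2πf₁j/n) (in Euclidean norm) as p → ∞; i.e., in the limit of iterations the first extracted IMF is exactly the higher-frequency component. -/

import Mathlib

open Finset Filter

/-- Discrete Fourier transform of `w : ZMod n → ℂ` at frequency `ξ`. -/
noncomputable def dft (n : ℕ) [NeZero n] (w : ZMod n → ℂ) (ξ : ZMod n) : ℂ :=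
  ∑ j : ZMod n, w j *
    Complex.exp (-2 * Real.pi * Complex.I * ((ξ.val : ℂ) * (j.val : ℂ)) / n)

/-- One step of the (circular) variation operator `V_w s = s − w * s`. -/
noncomputable def circVar (n : ℕ) [NeZero n] (w : ZMod n → ℂ) (s : ZMod n → ℂ) :
    ZMod n → ℂ :=
  fun j => s j - ∑ k : ZMod n, w k * s (j - k)

lemma exp_congr_aux (n : ℕ) [NeZero n] (A B : ℤ) (h : (A : ZMod n) = (B : ZMod n)) :
    Complex.exp (2 * Real.pi * Complex.I * A / n) =
      Complex.exp (2 * Real.pi * Complex.I * B / n) := by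
  have hd : (n : ℤ) ∣ A - B := by
    have : ((A - B : ℤ) : ZMod n) = 0 := by push_cast [h]; ring
    exact (ZMod.intCast_zmod_eq_zero_iff_dvd _ n).mp this
  obtain ⟨t, ht⟩ := hd
  have hA : (A : ℂ) = B + n * t := by
    have : A = B + n * t := by linarith [ht]
    exact_mod_cast congrArg (Int.cast : ℤ → ℂ) this
  have hn : (n : ℂ) ≠ 0 := Nat.cast_ne_zero.mpr (NeZero.ne n)
  rw [hA, show 2 * (Real.pi : ℂ) * Complex.I * ((B : ℂ) + n * t) / n =
      2 * (Real.pi : ℂ) * Complex.I * B / n + t * (2 * Real.pi * Complex.I) by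
    field_simp]
  rw [Complex.exp_add, Complex.exp_int_mul_two_pi_mul_I, mul_one]

lemma circVar_exp_eigen (n : ℕ) [NeZero n] (w : ZMod n → ℂ) (c : ℤ) (j : ZMod n) :
    circVar n w (fun k => Complex.exp (2 * Real.pi * Complex.I * c * k.val / n)) j
      = (1 - dft n w (c : ZMod n)) *
          Complex.exp (2 * Real.pi * Complex.I * c * j.val / n) := by
  have key : ∀ k : ZMod n,
      Complex.exp (2 * Real.pi * Complex.I * c * ((j - k).val : ℂ) / n)
        = Complex.exp (-2 * Real.pi * Complex.I *
            ((((c : ZMod n).val : ℕ) : ℂ) * ((k.val : ℕ) : ℂ)) / n) *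
          Complex.exp (2 * Real.pi * Complex.I * c * (j.val : ℂ) / n) := by
    intro k
    rw [← Complex.exp_add]
    have h1 : 2 * (Real.pi : ℂ) * Complex.I * c * ((j - k).val : ℂ) / n
        = 2 * Real.pi * Complex.I * ((c * ((j - k).val : ℤ) : ℤ) : ℂ) / n := by
      push_cast; ring
    have h2 : -2 * (Real.pi : ℂ) * Complex.I *
          ((((c : ZMod n).val : ℕ) : ℂ) * ((k.val : ℕ) : ℂ)) / n +
        2 * Real.pi * Complex.I * c * (j.val : ℂ) / n
        = 2 * Real.pi * Complex.I *
            ((c * (j.val : ℤ) - ((c : ZMod n).val : ℤ) * (k.val : ℤ) : ℤ) : ℂ) / n := by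
      push_cast; ring
    rw [h1, h2]
    apply exp_congr_aux
    push_cast [ZMod.natCast_val, ZMod.cast_id]
    ring
  simp only [circVar, dft]
  rw [Finset.sum_congr rfl fun k _ => by rw [key k]]
  rw [show ∀ S : ℂ, (1 - S) * Complex.exp (2 * Real.pi * Complex.I * c * (j.val : ℂ) / n)
      = Complex.exp (2 * Real.pi * Complex.I * c * (j.val : ℂ) / n) -
        S * Complex.exp (2 * Real.pi * Complex.I * c * (j.val : ℂ) / n) from
    fun S => by ring]
  rw [Finset.sum_mul]
  congr 1
  exact Finset.sum_congr rfl fun k _ => by ring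

lemma circVar_comb (n : ℕ) [NeZero n] (w : ZMod n → ℂ) (α β : ℂ)
    (u v : ZMod n → ℂ) (j : ZMod n) :
    circVar n w (fun k => α * u k + β * v k) j
      = α * circVar n w u j + β * circVar n w v j := by
  simp only [circVar]
  rw [Finset.sum_congr rfl fun k _ =>
    (by ring : w k * (α * u (j - k) + β * v (j - k))
      = α * (w k * u (j - k)) + β * (w k * v (j - k)))]
  rw [Finset.sum_add_distrib, ← Finset.mul_sum, ← Finset.mul_sum]
  ring

lemma circVar_tone (n : ℕ) [NeZero n] (w : ZMod n → ℂ)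
    (h_even : ∀ ξ : ZMod n, dft n w (-ξ) = dft n w ξ) (c : ℕ) (ψ : ℝ) (j : ZMod n) :
    circVar n w (fun k => ((Real.cos (2 * Real.pi * c * (k.val : ℝ) / n + ψ) : ℝ) : ℂ)) j
      = (1 - dft n w (c : ZMod n)) *
          ((Real.cos (2 * Real.pi * c * (j.val : ℝ) / n + ψ) : ℝ) : ℂ) := by
  have tone_eq : ∀ k : ZMod n,
      ((Real.cos (2 * Real.pi * c * (k.val : ℝ) / n + ψ) : ℝ) : ℂ)
        = (Complex.exp (ψ * Complex.I) / 2) *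
            Complex.exp (2 * Real.pi * Complex.I * ((c : ℤ) : ℂ) * (k.val : ℂ) / n) +
          (Complex.exp (-(ψ * Complex.I)) / 2) *
            Complex.exp (2 * Real.pi * Complex.I * ((-c : ℤ) : ℂ) * (k.val : ℂ) / n) := by
    intro k
    rw [Complex.ofReal_cos, Complex.cos]
    have e1 : Complex.exp (((2 * Real.pi * c * (k.val : ℝ) / n + ψ : ℝ) : ℂ) * Complex.I)
        = Complex.exp (ψ * Complex.I) *
          Complex.exp (2 * Real.pi * Complex.I * ((c : ℤ) : ℂ) * (k.val : ℂ) / n) := by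
      rw [← Complex.exp_add]; congr 1; push_cast; ring
    have e2 : Complex.exp (-((2 * Real.pi * c * (k.val : ℝ) / n + ψ : ℝ) : ℂ) * Complex.I)
        = Complex.exp (-(ψ * Complex.I)) *
          Complex.exp (2 * Real.pi * Complex.I * ((-c : ℤ) : ℂ) * (k.val : ℂ) / n) := by
      rw [← Complex.exp_add]; congr 1; push_cast; ring
    rw [e1, e2]
    ring
  have heq : dft n w (((-c : ℤ) : ZMod n)) = dft n w (c : ZMod n) := by
    rw [show ((-c : ℤ) : ZMod n) = -((c : ℕ) : ZMod n) by push_cast; ring, h_even]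
  calc circVar n w (fun k => ((Real.cos (2 * Real.pi * c * (k.val : ℝ) / n + ψ) : ℝ) : ℂ)) j
      = circVar n w (fun k =>
          (Complex.exp (ψ * Complex.I) / 2) *
            Complex.exp (2 * Real.pi * Complex.I * ((c : ℤ) : ℂ) * (k.val : ℂ) / n) +
          (Complex.exp (-(ψ * Complex.I)) / 2) *
            Complex.exp (2 * Real.pi * Complex.I * ((-c : ℤ) : ℂ) * (k.val : ℂ) / n)) j := by
        congr 1; funext k; exact tone_eq k
    _ = (Complex.exp (ψ * Complex.I) / 2) *
          ((1 - dft n w ((c : ℤ) : ZMod n)) *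
            Complex.exp (2 * Real.pi * Complex.I * ((c : ℤ) : ℂ) * (j.val : ℂ) / n)) +
        (Complex.exp (-(ψ * Complex.I)) / 2) *
          ((1 - dft n w (((-c : ℤ) : ZMod n))) *
            Complex.exp (2 * Real.pi * Complex.I * ((-c : ℤ) : ℂ) * (j.val : ℂ) / n)) := by
        rw [circVar_comb, circVar_exp_eigen, circVar_exp_eigen]
    _ = (1 - dft n w (c : ZMod n)) *
          ((Complex.exp (ψ * Complex.I) / 2) *
            Complex.exp (2 * Real.pi * Complex.I * ((c : ℤ) : ℂ) * (j.val : ℂ) / n) +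
          (Complex.exp (-(ψ * Complex.I)) / 2) *
            Complex.exp (2 * Real.pi * Complex.I * ((-c : ℤ) : ℂ) * (j.val : ℂ) / n)) := by
        rw [heq, show ((c : ℕ) : ℤ) = (c : ℤ) from rfl]
        push_cast
        ring
    _ = (1 - dft n w (c : ZMod n)) *
          ((Real.cos (2 * Real.pi * c * (j.val : ℝ) / n + ψ) : ℝ) : ℂ) := by
        rw [← tone_eq j]

/-- Two-tone separation by Fast Iterative Filtering. For
`s j = cos(2πf₁j/n) + a·cos(2πf₂j/n + φ)` with integer frequencies
`1 ≤ f₂ < f₁ ≤ n/2 − 1`, and a double convolution filter `w` whose (even, real,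
`[0,1]`-valued) DFT vanishes at `f₁` and lies in `(0,1]` at `f₂`, the iterates
`V_w^p s` converge in Euclidean norm to the higher-frequency component
`cos(2πf₁j/n)` as `p → ∞`. -/
theorem two_tone_separation
    (n : ℕ) [NeZero n] (f₁ f₂ : ℕ) (a φ : ℝ)
    (hf2pos : 1 ≤ f₂) (hlt : f₂ < f₁) (hf1 : f₁ ≤ n / 2 - 1)
    (w : ZMod n → ℂ)
    (h_range : ∀ ξ : ZMod n, ∃ r : ℝ, r ∈ Set.Icc (0 : ℝ) 1 ∧ dft n w ξ = (r : ℂ))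
    (h_even : ∀ ξ : ZMod n, dft n w (-ξ) = dft n w ξ)
    (h_zero : dft n w (f₁ : ZMod n) = 0)
    (h_pos : ∃ r : ℝ, r ∈ Set.Ioc (0 : ℝ) 1 ∧ dft n w (f₂ : ZMod n) = (r : ℂ))
    (s s₁ : ZMod n → ℂ)
    (hs : ∀ j : ZMod n, s j = (Real.cos (2 * Real.pi * f₁ * (j.val : ℝ) / n) : ℂ) +
      (a : ℂ) * (Real.cos (2 * Real.pi * f₂ * (j.val : ℝ) / n + φ) : ℂ))
    (hs₁ : ∀ j : ZMod n, s₁ j = (Real.cos (2 * Real.pi * f₁ * (j.val : ℝ) / n) : ℂ)) :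
    Tendsto (fun p : ℕ =>
        Real.sqrt (∑ j : ZMod n, ‖(circVar n w)^[p] s j - s₁ j‖ ^ 2))
      atTop (nhds 0) := by
  obtain ⟨r, ⟨hr0, hr1⟩, hdft2⟩ := h_pos
  set μ : ℝ := 1 - r with hμ
  have hμ0 : 0 ≤ μ := by simp [hμ]; linarith
  have hμ1 : μ < 1 := by simp [hμ]; linarith
  set g : ZMod n → ℂ :=
    fun k => ((Real.cos (2 * Real.pi * f₂ * (k.val : ℝ) / n + φ) : ℝ) : ℂ) with hg
  set t₂ : ZMod n → ℂ := fun k => (a : ℂ) * g k with ht₂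
  have hfix : ∀ j, circVar n w s₁ j = s₁ j := by
    intro j
    have he : circVar n w s₁ j = circVar n w
        (fun k => ((Real.cos (2 * Real.pi * f₁ * (k.val : ℝ) / n + 0) : ℝ) : ℂ)) j := by
      congr 1; funext k; rw [hs₁ k, add_zero]
    rw [he, circVar_tone n w h_even f₁ 0 j, h_zero, hs₁ j, add_zero]; ring
  have hscale : ∀ j, circVar n w t₂ j = (μ : ℂ) * t₂ j := by
    intro j
    have he : circVar n w t₂ j = circVar n w (fun k => (a : ℂ) * g k + 0 * g k) j := by
      congr 1; funext k; ring
    have htone := circVar_tone n w h_even f₂ φ j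
    rw [← hg] at htone
    rw [he, circVar_comb, htone, hdft2]
    simp only [ht₂]
    rw [hμ, Complex.ofReal_sub, Complex.ofReal_one, hg]
    simp only []
    ring
  have key : ∀ p : ℕ, (circVar n w)^[p] s = fun j => s₁ j + ((μ : ℂ)) ^ p * t₂ j := by
    intro p
    induction p with
    | zero =>
      funext j
      simp only [Function.iterate_zero, id_eq, pow_zero, one_mul]
      rw [hs j, hs₁ j, ht₂, hg]
    | succ p ih =>
      rw [Function.iterate_succ_apply', ih]
      funext j
      have he : circVar n w (fun k => s₁ k + (μ : ℂ) ^ p * t₂ k) j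
          = circVar n w (fun k => 1 * s₁ k + (μ : ℂ) ^ p * t₂ k) j := by
        congr 1; funext k; ring
      rw [he, circVar_comb, hfix j, hscale j]
      ring
  have hval : ∀ p : ℕ,
      Real.sqrt (∑ j : ZMod n, ‖(circVar n w)^[p] s j - s₁ j‖ ^ 2)
        = μ ^ p * Real.sqrt (∑ j : ZMod n, ‖t₂ j‖ ^ 2) := by
    intro p
    have h1 : ∀ j : ZMod n,
        ‖(circVar n w)^[p] s j - s₁ j‖ ^ 2
          = (μ ^ p) ^ 2 * ‖t₂ j‖ ^ 2 := by
      intro j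
      rw [key p]
      simp only [add_sub_cancel_left]
      rw [norm_mul, norm_pow, Complex.norm_real, Real.norm_of_nonneg hμ0]
      ring
    rw [Finset.sum_congr rfl fun j _ => h1 j, ← Finset.mul_sum,
      Real.sqrt_mul (sq_nonneg _), Real.sqrt_sq (pow_nonneg hμ0 p)]
  simp only [hval]
  have := (tendsto_pow_atTop_nhds_zero_of_lt_one hμ0 hμ1).mul_const
    (Real.sqrt (∑ j : ZMod n, ‖t₂ j‖ ^ 2))
  rwa [zero_mul] at this
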